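/- Let μ be a Borel probability measure with compact support contained in M^{2×2}_+. Then the barycentre of the dual measure satisfies (μ̃)‾ = Ψ(μ̄) if and only if μ is polyconvex, i.e. if and only if ∫ det X dμ(X) = det(μ̄). Moreover, in general the barycentre of μ̃ is (1/μ̄₁₂)·[[−μ̄₁₁, 1], [−∫ det X dμ(X), μ̄₂₂]]. -/

import Mathlib

open MeasureTheory

noncomputable section

instance matrixMeasurableSpace {m n : ℕ} : MeasurableSpace (Matrix (Fin m) (Fin n) ℝ) :=
  show MeasurableSpace (Fin m → Fin n → ℝ) from inferInstance

/-- The Jacobian matrix of `φ : ℝⁿ → ℝᵐ` at `x`. -/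
def jacobianM (m n : ℕ) (φ : (Fin n → ℝ) → (Fin m → ℝ)) (x : Fin n → ℝ) :
    Matrix (Fin m) (Fin n) ℝ :=
  Matrix.of fun i j => fderiv ℝ φ x (Pi.single j 1) i

/-- `f : ℝ^{m×n} → ℝ` is quasiconvex: `f` is Borel measurable, locally bounded, and for every
nonempty bounded open `Ω ⊆ ℝⁿ`, every `X₀` and every smooth `φ` compactly supported in `Ω`,
`f X₀ * |Ω| ≤ ∫_Ω f (X₀ + Dφ x) dx`. -/
def IsQuasiconvex {m n : ℕ} (f : Matrix (Fin m) (Fin n) ℝ → ℝ) : Prop :=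
  Measurable f ∧
  (∀ K : Set (Matrix (Fin m) (Fin n) ℝ), IsCompact K → ∃ C : ℝ, ∀ X ∈ K, |f X| ≤ C) ∧
  ∀ Ω : Set (Fin n → ℝ), IsOpen Ω → Ω.Nonempty → Bornology.IsBounded Ω →
    ∀ (X₀ : Matrix (Fin m) (Fin n) ℝ) (φ : (Fin n → ℝ) → (Fin m → ℝ)),
      ContDiff ℝ (⊤ : ℕ∞) φ → HasCompactSupport φ → tsupport φ ⊆ Ω →
      f X₀ * (volume Ω).toReal ≤ ∫ x in Ω, f (X₀ + jacobianM m n φ x)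

/-- `f : ℝ^{m×n} → ℝ` is rank-one convex. -/
def IsRankOneConvex {m n : ℕ} (f : Matrix (Fin m) (Fin n) ℝ → ℝ) : Prop :=
  ∀ X Y : Matrix (Fin m) (Fin n) ℝ, (X - Y).rank ≤ 1 →
    ∀ t : ℝ, t ∈ Set.Icc (0 : ℝ) 1 →
      f (t • X + (1 - t) • Y) ≤ t * f X + (1 - t) * f Y

/-- The barycentre `μ̄ = ∫ X dμ(X)`, computed entrywise. -/
def matBarycenter {m n : ℕ} (μ : Measure (Matrix (Fin m) (Fin n) ℝ)) :
    Matrix (Fin m) (Fin n) ℝ :=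
  Matrix.of fun i j => ∫ X, X i j ∂μ

/-- `M^{2×n}_tri`: second row is `(0, …, 0, a)`. -/
def Mtri (n : ℕ) : Set (Matrix (Fin 2) (Fin n) ℝ) :=
  {X | ∀ j : Fin n, (j : ℕ) + 1 < n → X 1 j = 0}

/-- `M^{2×n}_diag`: first row `(a₁, …, a_{n-1}, 0)`, second row `(0, …, 0, b)`. -/
def Mdiag (n : ℕ) : Set (Matrix (Fin 2) (Fin n) ℝ) :=
  {X | (∀ j : Fin n, (j : ℕ) + 1 < n → X 1 j = 0) ∧
       (∀ j : Fin n, (j : ℕ) + 1 = n → X 0 j = 0)}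

/-- The orthogonal projection of `ℝ^{2×n}` onto `M^{2×n}_diag`. -/
def Pdiag (n : ℕ) (X : Matrix (Fin 2) (Fin n) ℝ) : Matrix (Fin 2) (Fin n) ℝ :=
  Matrix.of fun i j =>
    if i = 0 then (if (j : ℕ) + 1 < n then X 0 j else 0)
    else (if (j : ℕ) + 1 = n then X 1 j else 0)

/-- A homogeneous gradient Young measure: a compactly supported Borel probability measure
satisfying Jensen's inequality for all quasiconvex functions. -/
def IsHomogeneousGradientYoungMeasure {m n : ℕ}
    (μ : Measure (Matrix (Fin m) (Fin n) ℝ)) : Prop :=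
  IsProbabilityMeasure μ ∧ (∃ K, IsCompact K ∧ μ Kᶜ = 0) ∧
  ∀ f : Matrix (Fin m) (Fin n) ℝ → ℝ, IsQuasiconvex f →
    f (matBarycenter μ) ≤ ∫ X, f X ∂μ

/-- A laminate: a compactly supported Borel probability measure
satisfying Jensen's inequality for all rank-one convex functions. -/
def IsLaminate {m n : ℕ} (μ : Measure (Matrix (Fin m) (Fin n) ℝ)) : Prop :=
  IsProbabilityMeasure μ ∧ (∃ K, IsCompact K ∧ μ Kᶜ = 0) ∧
  ∀ f : Matrix (Fin m) (Fin n) ℝ → ℝ, IsRankOneConvex f →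
    f (matBarycenter μ) ≤ ∫ X, f X ∂μ

/-- `M^{2×2}_+ = {X : X₁₂ > 0}`. -/
def Mplus : Set (Matrix (Fin 2) (Fin 2) ℝ) := {X | 0 < X 0 1}

/-- The partial Legendre transform `Ψ`. -/
def Psi (X : Matrix (Fin 2) (Fin 2) ℝ) : Matrix (Fin 2) (Fin 2) ℝ :=
  (X 0 1)⁻¹ • !![-(X 0 0), 1; -X.det, X 1 1]

/-- The dual function `h̃(X) = X₁₂ · h(Ψ(X))`. -/
def dualFn (h : Matrix (Fin 2) (Fin 2) ℝ → ℝ) (X : Matrix (Fin 2) (Fin 2) ℝ) : ℝ :=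
  X 0 1 * h (Psi X)

/-- The dual measure `μ̃`, characterised by
`∫ f dμ̃ = (1/μ̄₁₂) ∫ X₁₂ · f(Ψ(X)) dμ(X)` for all Borel `f : M → [0,∞]`. -/
def dualMeasure (μ : Measure (Matrix (Fin 2) (Fin 2) ℝ)) :
    Measure (Matrix (Fin 2) (Fin 2) ℝ) :=
  Measure.map Psi
    ((ENNReal.ofReal (matBarycenter μ 0 1))⁻¹ •
      μ.withDensity fun X => ENNReal.ofReal (X 0 1))

/-- The (topological) support of a measure. -/
def mSupport {α : Type*} [TopologicalSpace α] [MeasurableSpace α] (μ : Measure α) : Set α :=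
  {x | ∀ U : Set α, IsOpen U → x ∈ U → μ U ≠ 0}

/-- `f` is quasiconvex on the open set `U ⊆ ℝ^{2×2}`. -/
def IsQuasiconvexOn (U : Set (Matrix (Fin 2) (Fin 2) ℝ))
    (f : Matrix (Fin 2) (Fin 2) ℝ → ℝ) : Prop :=
  ∀ Ω : Set (Fin 2 → ℝ), IsOpen Ω → Ω.Nonempty → Bornology.IsBounded Ω →
    ∀ (A : Matrix (Fin 2) (Fin 2) ℝ) (φ : (Fin 2 → ℝ) → (Fin 2 → ℝ)),
      ContDiff ℝ (⊤ : ℕ∞) φ → HasCompactSupport φ → tsupport φ ⊆ Ω →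
      (∀ x, A + jacobianM 2 2 φ x ∈ U) →
      f A * (volume Ω).toReal ≤ ∫ x in Ω, f (A + jacobianM 2 2 φ x)

/-- `f` is rank-one convex on the open convex set `U ⊆ ℝ^{2×2}`. -/
def IsRankOneConvexOn (U : Set (Matrix (Fin 2) (Fin 2) ℝ))
    (f : Matrix (Fin 2) (Fin 2) ℝ → ℝ) : Prop :=
  ∀ X ∈ U, ∀ Y ∈ U, (X - Y).rank ≤ 1 →
    ∀ t : ℝ, t ∈ Set.Icc (0 : ℝ) 1 →
      f (t • X + (1 - t) • Y) ≤ t * f X + (1 - t) * f Y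

open scoped NNReal ENNReal

section Aux

local notation "M2" => Matrix (Fin 2) (Fin 2) ℝ

instance matrixBorelSpace {m n : ℕ} : BorelSpace (Matrix (Fin m) (Fin n) ℝ) :=
  show BorelSpace (Fin m → Fin n → ℝ) from inferInstance

lemma coord_continuous (i j : Fin 2) : Continuous fun X : M2 => X i j :=
  (continuous_apply j).comp (continuous_apply i)

lemma coord_measurable (i j : Fin 2) : Measurable fun X : M2 => X i j :=
  (measurable_pi_apply j).comp (measurable_pi_apply i)

lemma det_measurable2 : Measurable fun X : M2 => X.det := by
  simp only [Matrix.det_fin_two]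
  exact ((coord_measurable 0 0).mul (coord_measurable 1 1)).sub
    ((coord_measurable 0 1).mul (coord_measurable 1 0))

lemma psi_apply (X : M2) (i j : Fin 2) :
    Psi X i j = (X 0 1)⁻¹ * (!![-(X 0 0), 1; -X.det, X 1 1] i j) := rfl

lemma measurable_psi : Measurable Psi := by
  refine @measurable_pi_iff.mpr (fun i => ?_)
  rw [measurable_pi_iff]; intro j
  have : (fun X : M2 => Psi X i j)
      = fun X : M2 => (X 0 1)⁻¹ * (!![-(X 0 0), 1; -X.det, X 1 1] i j) := rfl
  rw [this]
  refine (coord_measurable 0 1).inv.mul ?_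
  fin_cases i <;> fin_cases j <;>
    simp only [Matrix.cons_val', Matrix.cons_val_zero, Matrix.cons_val_one,
      Matrix.head_cons, Matrix.empty_val', Matrix.cons_val_fin_one, Matrix.head_fin_const,
      Fin.isValue, Fin.zero_eta, Fin.mk_one]
  · exact (coord_measurable 0 0).neg
  · exact measurable_const
  · exact det_measurable2.neg
  · exact coord_measurable 1 1

end Aux

/-- The barycentre of the dual measure satisfies `(μ̃)‾ = Ψ(μ̄)` iff `μ` is polyconvex;
moreover in general `(μ̃)‾ = (1/μ̄₁₂)·[[−μ̄₁₁, 1], [−∫ det X dμ, μ̄₂₂]]`. -/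
theorem dualMeasure_barycenter
    (μ : Measure (Matrix (Fin 2) (Fin 2) ℝ))
    (hprob : IsProbabilityMeasure μ)
    (hsupp : ∃ K : Set (Matrix (Fin 2) (Fin 2) ℝ), IsCompact K ∧ K ⊆ Mplus ∧ μ Kᶜ = 0) :
    (matBarycenter (dualMeasure μ) = Psi (matBarycenter μ) ↔
      ∫ X, X.det ∂μ = (matBarycenter μ).det) ∧
    matBarycenter (dualMeasure μ) =
      (matBarycenter μ 0 1)⁻¹ •
        !![-(matBarycenter μ 0 0), 1; -(∫ X, X.det ∂μ), matBarycenter μ 1 1] := by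
  obtain ⟨K, hKc, hKp, hK0⟩ := hsupp
  have haeK : ∀ᵐ X ∂μ, X ∈ K := by
    rw [MeasureTheory.ae_iff]
    simpa [Set.compl_def] using hK0
  have hKne : K.Nonempty := by
    by_contra h
    rw [Set.not_nonempty_iff_eq_empty] at h
    rw [h, Set.compl_empty, measure_univ] at hK0
    exact one_ne_zero hK0
  have hint : ∀ f : Matrix (Fin 2) (Fin 2) ℝ → ℝ, Continuous f → Integrable f μ := by
    intro f hf
    obtain ⟨C, hC⟩ := hKc.exists_bound_of_continuousOn hf.continuousOn
    exact (integrable_const C).mono' hf.aestronglyMeasurable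
      (haeK.mono fun X hX => hC X hX)
  obtain ⟨X₀, hX₀K, hmin⟩ := hKc.exists_isMinOn hKne (coord_continuous 0 1).continuousOn
  have hε : 0 < X₀ 0 1 := hKp hX₀K
  set b := matBarycenter μ 0 1 with hbdef
  have hbeq : b = ∫ X, X 0 1 ∂μ := rfl
  have hbpos : 0 < b := by
    have h1 : X₀ 0 1 ≤ ∫ X, X 0 1 ∂μ := by
      have := integral_mono_ae (integrable_const (X₀ 0 1))
        (hint _ (coord_continuous 0 1)) (haeK.mono fun X hX => hmin hX)
      simpa using this
    rw [hbeq]; linarith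
  have hae01 : ∀ᵐ X ∂μ, 0 < X 0 1 := haeK.mono fun X hX => hKp hX
  have hdual : ∀ (i j : Fin 2) (g : Matrix (Fin 2) (Fin 2) ℝ → ℝ),
      (∀ X, 0 < X 0 1 → X 0 1 * Psi X i j = g X) →
      matBarycenter (dualMeasure μ) i j = b⁻¹ * ∫ X, g X ∂μ := by
    intro i j g hg
    have h1 : matBarycenter (dualMeasure μ) i j = ∫ Y, Y i j ∂(dualMeasure μ) := rfl
    rw [h1]
    unfold dualMeasure
    rw [integral_map measurable_psi.aemeasurable
      ((coord_measurable i j).aestronglyMeasurable)]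
    rw [integral_smul_measure]
    have h2 : μ.withDensity (fun X => ENNReal.ofReal (X 0 1))
        = μ.withDensity (fun X => (((X 0 1).toNNReal : ℝ≥0) : ℝ≥0∞)) := rfl
    rw [h2, integral_withDensity_eq_integral_smul
      ((coord_measurable 0 1).real_toNNReal) (fun X => Psi X i j)]
    have h3 : ∫ X, (X 0 1).toNNReal • Psi X i j ∂μ = ∫ X, g X ∂μ := by
      refine integral_congr_ae ?_
      filter_upwards [hae01] with X hX
      rw [NNReal.smul_def, smul_eq_mul, Real.coe_toNNReal _ hX.le, hg X hX]
    rw [h3]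
    have h4 : ((ENNReal.ofReal b)⁻¹).toReal = b⁻¹ := by
      rw [ENNReal.toReal_inv, ENNReal.toReal_ofReal hbpos.le]
    rw [← hbdef, h4, smul_eq_mul]
  have e00 : matBarycenter (dualMeasure μ) 0 0 = b⁻¹ * (-(matBarycenter μ 0 0)) := by
    rw [hdual 0 0 (fun X => -(X 0 0)) ?_]
    · congr 1
      rw [integral_neg]; rfl
    · intro X hX
      rw [psi_apply]
      simp only [Matrix.of_apply, Matrix.cons_val', Matrix.cons_val_zero, Matrix.empty_val',
        Matrix.cons_val_fin_one]
      field_simp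
      try ring
  have e01 : matBarycenter (dualMeasure μ) 0 1 = b⁻¹ * 1 := by
    rw [hdual 0 1 (fun _ => (1 : ℝ)) ?_]
    · congr 1
      simp
    · intro X hX
      rw [psi_apply]
      simp only [Matrix.of_apply, Matrix.cons_val', Matrix.cons_val_zero, Matrix.cons_val_one,
        Matrix.head_cons, Matrix.empty_val', Matrix.cons_val_fin_one]
      field_simp
      try ring
  have e10 : matBarycenter (dualMeasure μ) 1 0 = b⁻¹ * (-(∫ X, X.det ∂μ)) := by
    rw [hdual 1 0 (fun X => -(X.det)) ?_]
    · congr 1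
      rw [integral_neg]
    · intro X hX
      rw [psi_apply]
      simp only [Matrix.of_apply, Matrix.cons_val', Matrix.cons_val_zero, Matrix.cons_val_one,
        Matrix.head_cons, Matrix.empty_val', Matrix.cons_val_fin_one]
      field_simp
      try ring
  have e11 : matBarycenter (dualMeasure μ) 1 1 = b⁻¹ * matBarycenter μ 1 1 := by
    rw [hdual 1 1 (fun X => X 1 1) ?_]
    · rfl
    · intro X hX
      rw [psi_apply]
      simp only [Matrix.of_apply, Matrix.cons_val', Matrix.cons_val_one, Matrix.head_cons,
        Matrix.empty_val', Matrix.cons_val_fin_one, Matrix.head_fin_const]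
      field_simp
      try ring
  have hmat : matBarycenter (dualMeasure μ) =
      b⁻¹ • !![-(matBarycenter μ 0 0), 1; -(∫ X, X.det ∂μ), matBarycenter μ 1 1] := by
    ext i j
    fin_cases i <;> fin_cases j <;>
      simp [Matrix.smul_apply, smul_eq_mul, e00, e01, e10, e11]
  refine ⟨⟨?_, ?_⟩, hmat⟩
  · intro h
    have h10 := congrFun (congrFun (h.symm.trans hmat) 1) 0
    rw [psi_apply] at h10
    simp only [Matrix.smul_apply, smul_eq_mul, Matrix.cons_val', Matrix.cons_val_zero,
      Matrix.cons_val_one, Matrix.head_cons, Matrix.empty_val',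
      Matrix.cons_val_fin_one] at h10
    have := mul_left_cancel₀ (inv_ne_zero hbpos.ne') h10
    linarith [neg_injective this]
  · intro h
    rw [hmat, h]
    rfl

end
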